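/- Let m₁ ≥ 1 and m₂ ≥ 0 be integers, ρ = m₁/2 + m₂, and assume either (m₂ = 0 and m₁ is odd), in which case set j = 1, or (m₁ is even and m₂ is odd), in which case set j = 2. Then for every ζ₀ ∈ ℂ, the function ζ ↦ c(iζ)·c(−iζ) tends to 0 as ζ → ζ₀ along the punctured neighbourhood filter 𝓝[≠] ζ₀ if and only if there exists k ∈ ℕ (k ≥ 0) with ζ₀ = i·(ρ + j·k) or ζ₀ = −i·(ρ + j·k). -/

import Mathlib

open Set Filter Topology

noncomputable section

/-- `ρ = m₁/2 + m₂`. -/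
def rho (m₁ m₂ : ℕ) : ℝ := m₁ / 2 + m₂

/-- `g(μ) = Γ(μ)2^{−μ}/(Γ((m₁/2+1+μ)/2)Γ((m₁/2+m₂+μ)/2))`. -/
def gfun (m₁ m₂ : ℕ) (μ : ℂ) : ℂ :=
  Complex.Gamma μ * (2 : ℂ) ^ (-μ) /
    (Complex.Gamma (((m₁ : ℂ) / 2 + 1 + μ) / 2) *
      Complex.Gamma (((m₁ : ℂ) / 2 + (m₂ : ℂ) + μ) / 2))

/-- The Harish-Chandra c-function, normalized so that `c(ρ) = 1`. -/
def cfun (m₁ m₂ : ℕ) (μ : ℂ) : ℂ := gfun m₁ m₂ μ / gfun m₁ m₂ ((rho m₁ m₂ : ℂ))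

namespace CZL

open Complex Finset

/-! ### Generalities -/

lemma piC_ne : (Real.pi : ℂ) ≠ 0 := by exact_mod_cast Real.pi_ne_zero

lemma ev_ne_pt (μ₀ p : ℂ) : ∀ᶠ μ in 𝓝[≠] μ₀, μ ≠ p := by
  by_cases hp : p = μ₀
  · subst hp; exact eventually_mem_nhdsWithin.mono fun x hx => hx
  · exact nhdsWithin_le_nhds (eventually_ne_nhds (Ne.symm hp))

lemma ev_ne_analytic {f : ℂ → ℂ} (hf : Differentiable ℂ f) {z₁ : ℂ} (h1 : f z₁ ≠ 0) (μ₀ : ℂ) :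
    ∀ᶠ μ in 𝓝[≠] μ₀, f μ ≠ 0 := by
  rcases (hf.analyticAt μ₀).eventually_eq_zero_or_eventually_ne_zero with h | h
  · exfalso
    have hA : AnalyticOnNhd ℂ f Set.univ := fun z _ => hf.analyticAt z
    have := hA.eqOn_zero_of_preconnected_of_eventuallyEq_zero isPreconnected_univ
      (Set.mem_univ μ₀) (by filter_upwards [h] with x hx using hx)
    exact h1 (this (Set.mem_univ z₁))
  · exact h

lemma GammaInv_step (w : ℂ) : (Complex.Gamma w)⁻¹ = w * (Complex.Gamma (w + 1))⁻¹ := by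
  by_cases hw : w = 0
  · simp [hw, Complex.Gamma_zero]
  · rw [Complex.Gamma_add_one w hw, mul_inv, ← mul_assoc, mul_inv_cancel₀ hw, one_mul]

lemma GammaInv_shift (z : ℂ) (n : ℕ) :
    (Complex.Gamma z)⁻¹ = (∏ l ∈ Finset.range n, (z + l)) * (Complex.Gamma (z + n))⁻¹ := by
  induction n with
  | zero => simp
  | succ n ih =>
    rw [ih, Finset.prod_range_succ, GammaInv_step (z + n)]
    push_cast
    rw [← mul_assoc, add_assoc]

lemma Gamma_shift (μ : ℂ) (n : ℕ) (h : ∀ l : ℕ, l < n → μ + l ≠ 0) :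
    Complex.Gamma μ = Complex.Gamma (μ + n) * (∏ l ∈ Finset.range n, (μ + l))⁻¹ := by
  induction n with
  | zero => simp
  | succ n ih =>
    have hn : μ + n ≠ 0 := h n (Nat.lt_succ_self n)
    have h' : ∀ l : ℕ, l < n → μ + l ≠ 0 := fun l hl => h l (hl.trans (Nat.lt_succ_self n))
    have key : Complex.Gamma (μ + (n+1:ℕ)) = (μ + n) * Complex.Gamma (μ + n) := by
      have := Complex.Gamma_add_one (μ + n) hn
      rw [← this]; push_cast; ring_nf
    rw [key, Finset.prod_range_succ, ih h', mul_inv]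
    field_simp

lemma contInvGamma (g : ℂ → ℂ) (hg : Differentiable ℂ g) :
    Continuous fun μ => (Complex.Gamma (g μ))⁻¹ := by
  have := (Complex.differentiable_one_div_Gamma.comp hg).continuous
  simpa [Function.comp_def] using this

lemma pos_nat_ne_neg_nat (p : ℕ) (hp : 0 < p) (m : ℕ) : ((p : ℂ)) ≠ -m := by
  intro h
  have : ((p + m : ℕ) : ℂ) = 0 := by push_cast; linear_combination h
  have := Nat.cast_eq_zero.mp this
  omega

lemma Gamma_nat_ne (p : ℕ) (hp : 0 < p) : Complex.Gamma (p : ℂ) ≠ 0 :=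
  Complex.Gamma_ne_zero (fun m => pos_nat_ne_neg_nat p hp m)

lemma tendsto_comp_mul (c : ℂ) (hc : c ≠ 0) (f : ℂ → ℂ) (ζ₀ : ℂ)
    (h : Tendsto f (𝓝[≠] (c * ζ₀)) (𝓝 0)) :
    Tendsto (fun ζ => f (c * ζ)) (𝓝[≠] ζ₀) (𝓝 0) := by
  apply h.comp
  rw [tendsto_nhdsWithin_iff]
  constructor
  · exact ((continuous_const.mul continuous_id).tendsto ζ₀).mono_left nhdsWithin_le_nhds
  · filter_upwards [self_mem_nhdsWithin] with ζ hζ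
    simp only [Set.mem_compl_iff, Set.mem_singleton_iff] at *
    exact fun hcc => hζ (mul_left_cancel₀ hc hcc)

lemma tendsto_comp_mul_iff (c : ℂ) (hc : c ≠ 0) (f : ℂ → ℂ) (ζ₀ : ℂ) :
    Tendsto (fun ζ => f (c * ζ)) (𝓝[≠] ζ₀) (𝓝 0) ↔ Tendsto f (𝓝[≠] (c * ζ₀)) (𝓝 0) := by
  constructor
  · intro h
    have h2 := tendsto_comp_mul c⁻¹ (inv_ne_zero hc) (fun ζ => f (c * ζ)) (c * ζ₀) (by
      rw [inv_mul_cancel_left₀ hc]; exact h)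
    have he : (fun μ => f (c * (c⁻¹ * μ))) = f := by funext μ; rw [mul_inv_cancel_left₀ hc]
    rwa [he] at h2
  · exact tendsto_comp_mul c hc f ζ₀

lemma tendsto_mul_const_zero_iff (c : ℂ) (hc : c ≠ 0) (f : ℂ → ℂ) (l : Filter ℂ) :
    Tendsto (fun z => f z * c) l (𝓝 0) ↔ Tendsto f l (𝓝 0) := by
  constructor
  · intro h
    have := h.mul_const c⁻¹
    simp only [mul_assoc, mul_inv_cancel₀ hc, mul_one, zero_mul] at this
    exact this
  · intro h; simpa using h.mul_const c

/-! ### The functions -/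

def qone (m₁ : ℕ) : ℂ := ((m₁ : ℂ) / 2 + 1) / 2
def qtwo (m₁ m₂ : ℕ) : ℂ := ((m₁ : ℂ) / 2 + (m₂ : ℂ)) / 2

def Afun (q₁ q₂ : ℂ) (μ : ℂ) : ℂ :=
  (Complex.Gamma (q₁ + μ/2))⁻¹ * (Complex.Gamma (q₂ + μ/2))⁻¹ *
    (Complex.Gamma (q₁ - μ/2))⁻¹ * (Complex.Gamma (q₂ - μ/2))⁻¹

def Phi (m₁ m₂ : ℕ) (μ : ℂ) : ℂ := gfun m₁ m₂ μ * gfun m₁ m₂ (-μ)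

lemma contAfun (q₁ q₂ : ℂ) : Continuous (Afun q₁ q₂) := by
  unfold Afun
  exact (((contInvGamma _ (by fun_prop)).mul (contInvGamma _ (by fun_prop))).mul
    (contInvGamma _ (by fun_prop))).mul (contInvGamma _ (by fun_prop))

lemma Phi_eq (m₁ m₂ : ℕ) (μ : ℂ) :
    Phi m₁ m₂ μ = Complex.Gamma μ * Complex.Gamma (-μ) * Afun (qone m₁) (qtwo m₁ m₂) μ := by
  have e1 : ((m₁ : ℂ) / 2 + 1 + μ) / 2 = qone m₁ + μ/2 := by unfold qone; ring
  have e2 : ((m₁ : ℂ) / 2 + (m₂ : ℂ) + μ) / 2 = qtwo m₁ m₂ + μ/2 := by unfold qtwo; ring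
  have e3 : ((m₁ : ℂ) / 2 + 1 + -μ) / 2 = qone m₁ - μ/2 := by unfold qone; ring
  have e4 : ((m₁ : ℂ) / 2 + (m₂ : ℂ) + -μ) / 2 = qtwo m₁ m₂ - μ/2 := by unfold qtwo; ring
  have h2 : (2:ℂ) ^ (-μ) * (2:ℂ) ^ (-(-μ)) = 1 := by
    rw [← Complex.cpow_add _ _ (by norm_num : (2:ℂ) ≠ 0)]
    simp
  unfold Phi gfun Afun
  rw [e1, e2, e3, e4, div_mul_div_comm, div_eq_mul_inv, mul_inv, mul_inv, mul_inv]
  linear_combination (Complex.Gamma μ * Complex.Gamma (-μ) *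
    (Complex.Gamma (qone m₁ + μ/2))⁻¹ * (Complex.Gamma (qtwo m₁ m₂ + μ/2))⁻¹ *
    (Complex.Gamma (qone m₁ - μ/2))⁻¹ * (Complex.Gamma (qtwo m₁ m₂ - μ/2))⁻¹) * h2

lemma Phi_neg (m₁ m₂ : ℕ) (μ : ℂ) : Phi m₁ m₂ (-μ) = Phi m₁ m₂ μ := by
  unfold Phi; rw [neg_neg, mul_comm]

lemma tendsto_Phi_neg_iff (m₁ m₂ : ℕ) (μ₀ : ℂ) :
    Tendsto (Phi m₁ m₂) (𝓝[≠] (-μ₀)) (𝓝 0) ↔ Tendsto (Phi m₁ m₂) (𝓝[≠] μ₀) (𝓝 0) := by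
  have h := tendsto_comp_mul_iff (-1) (by norm_num) (Phi m₁ m₂) μ₀
  simp only [neg_one_mul] at h
  have he : (fun ζ => Phi m₁ m₂ (-ζ)) = Phi m₁ m₂ := funext (Phi_neg m₁ m₂)
  rw [he] at h
  exact h.symm

lemma PhiB (m₁ m₂ : ℕ) (μ : ℂ) (h0 : μ ≠ 0) (hs : Complex.sin ((Real.pi:ℂ) * μ) ≠ 0) :
    Phi m₁ m₂ μ * (μ * Complex.sin ((Real.pi:ℂ) * μ)) =
      -(Real.pi:ℂ) * Afun (qone m₁) (qtwo m₁ m₂) μ := by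
  have hg : Complex.Gamma (1 - μ) = -μ * Complex.Gamma (-μ) := by
    have := Complex.Gamma_add_one (-μ) (neg_ne_zero.mpr h0)
    rw [← this]; ring_nf
  have hrefl := Complex.Gamma_mul_Gamma_one_sub μ
  have hmain : Complex.Gamma μ * Complex.Gamma (-μ) * (μ * Complex.sin ((Real.pi:ℂ) * μ))
      = -(Real.pi:ℂ) := by
    have h1 : Complex.Gamma μ * Complex.Gamma (-μ) * (μ * Complex.sin ((Real.pi:ℂ) * μ))
        = -(Complex.Gamma μ * Complex.Gamma (1 - μ)) * Complex.sin ((Real.pi:ℂ) * μ) := by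
      rw [hg]; ring
    rw [h1, hrefl, neg_mul, div_mul_cancel₀ _ hs]
  rw [Phi_eq]
  linear_combination (Afun (qone m₁) (qtwo m₁ m₂) μ) * hmain

/-! ### Case analysis at a point -/

lemma caseI (m₁ m₂ : ℕ) {μ₀ : ℂ} (hB : μ₀ * Complex.sin ((Real.pi:ℂ) * μ₀) ≠ 0) :
    Tendsto (Phi m₁ m₂) (𝓝[≠] μ₀) (𝓝 0) ↔ Afun (qone m₁) (qtwo m₁ m₂) μ₀ = 0 := by
  set A := Afun (qone m₁) (qtwo m₁ m₂) with hA
  set Bs : ℂ → ℂ := fun μ => μ * Complex.sin ((Real.pi:ℂ) * μ) with hBs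
  have hBc : Continuous Bs := by fun_prop
  have hev : ∀ᶠ μ in 𝓝[≠] μ₀, Phi m₁ m₂ μ = -(Real.pi:ℂ) * A μ / Bs μ := by
    filter_upwards [nhdsWithin_le_nhds (hBc.continuousAt.eventually_ne hB)] with μ hμ
    have h0 : μ ≠ 0 := fun h => hμ (by simp [hBs, h])
    have hs : Complex.sin ((Real.pi:ℂ)*μ) ≠ 0 := fun h => hμ (by simp [hBs, h])
    rw [eq_div_iff hμ]
    exact PhiB m₁ m₂ μ h0 hs
  have hlim : Tendsto (fun μ => -(Real.pi:ℂ) * A μ / Bs μ) (𝓝[≠] μ₀)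
      (𝓝 (-(Real.pi:ℂ) * A μ₀ / Bs μ₀)) :=
    (((continuous_const.mul (contAfun _ _)).continuousAt.div hBc.continuousAt hB)).tendsto.mono_left
      nhdsWithin_le_nhds
  constructor
  · intro h
    have h2 := (Filter.Tendsto.congr' hev h)
    have h3 := tendsto_nhds_unique h2 hlim
    rcases div_eq_zero_iff.mp h3.symm with h4 | h4
    · rcases mul_eq_zero.mp h4 with h5 | h5
      · exact absurd h5 (neg_ne_zero.mpr piC_ne)
      · exact h5
    · exact absurd h4 hB
  · intro hA0
    apply Filter.Tendsto.congr' (hev.mono fun μ hh => hh.symm)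
    simpa [hA0] using hlim

lemma caseII (m₁ m₂ : ℕ) {μ₀ : ℂ} (hA : Afun (qone m₁) (qtwo m₁ m₂) μ₀ ≠ 0) :
    ¬ Tendsto (Phi m₁ m₂) (𝓝[≠] μ₀) (𝓝 0) := by
  intro h
  set A := Afun (qone m₁) (qtwo m₁ m₂) with hAdef
  set Bs : ℂ → ℂ := fun μ => μ * Complex.sin ((Real.pi:ℂ) * μ) with hBs
  have hBc : Continuous Bs := by fun_prop
  have hBev : ∀ᶠ μ in 𝓝[≠] μ₀, Bs μ ≠ 0 := by
    apply ev_ne_analytic (by fun_prop) (z₁ := (1/2 : ℂ))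
    show (1/2 : ℂ) * Complex.sin ((Real.pi:ℂ) * (1/2 : ℂ)) ≠ 0
    have : (Real.pi:ℂ) * (1/2 : ℂ) = (Real.pi:ℂ)/2 := by ring
    rw [this, Complex.sin_pi_div_two]
    norm_num
  have hev : ∀ᶠ μ in 𝓝[≠] μ₀, Phi m₁ m₂ μ * Bs μ = -(Real.pi:ℂ) * A μ := by
    filter_upwards [hBev] with μ hμ
    have h0 : μ ≠ 0 := fun hh => hμ (by simp [hBs, hh])
    have hs : Complex.sin ((Real.pi:ℂ)*μ) ≠ 0 := fun hh => hμ (by simp [hBs, hh])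
    exact PhiB m₁ m₂ μ h0 hs
  have h1 : Tendsto (fun μ => Phi m₁ m₂ μ * Bs μ) (𝓝[≠] μ₀) (𝓝 0) := by
    have := h.mul ((hBc.continuousAt.tendsto).mono_left nhdsWithin_le_nhds)
    simpa using this
  have h2 : Tendsto (fun μ => -(Real.pi:ℂ) * A μ) (𝓝[≠] μ₀) (𝓝 0) :=
    Filter.Tendsto.congr' hev h1
  have h3 : Tendsto (fun μ => -(Real.pi:ℂ) * A μ) (𝓝[≠] μ₀) (𝓝 (-(Real.pi:ℂ) * A μ₀)) :=
    ((continuous_const.mul (contAfun _ _)).continuousAt.tendsto).mono_left nhdsWithin_le_nhds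
  have h4 := tendsto_nhds_unique h2 h3
  rcases mul_eq_zero.mp h4.symm with h5 | h5
  · exact absurd h5 (neg_ne_zero.mpr piC_ne)
  · exact hA h5


/-! ### Case III: the delicate points in case 2 -/

lemma one_ne_neg_nat (m : ℕ) : (1:ℂ) ≠ -m := by
  have := pos_nat_ne_neg_nat 1 one_pos m
  simpa using this

lemma caseIII (a b t : ℕ) (ha : 1 ≤ a) :
    Tendsto (Phi (2*a) (2*b+1)) (𝓝[≠] (-((a+1+2*t : ℕ) : ℂ))) (𝓝 0) ↔ b ≤ t := by
  set s : ℕ := a+1+2*t with hs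
  set μ₀ : ℂ := -(s : ℂ) with hμ₀
  have hq₁ : qone (2*a) = ((a:ℂ)+1)/2 := by unfold qone; push_cast; ring
  have hq₂ : qtwo (2*a) (2*b+1) = ((a:ℂ)+2*b+1)/2 := by unfold qtwo; push_cast; ring
  set Ψ : ℂ → ℂ := fun μ =>
    Complex.Gamma (μ + ((s+1:ℕ):ℂ)) * (∏ l ∈ Finset.range s, (μ + (l:ℂ)))⁻¹ *
    (∏ l ∈ Finset.range t, (qone (2*a) + μ/2 + (l:ℂ))) * (2:ℂ)⁻¹ *
    (Complex.Gamma (qone (2*a) + μ/2 + ((t+1:ℕ):ℂ)))⁻¹ *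
    (Complex.Gamma (qtwo (2*a) (2*b+1) + μ/2))⁻¹ *
    (Complex.Gamma (-μ) *
     (Complex.Gamma (qone (2*a) - μ/2))⁻¹ *
     (Complex.Gamma (qtwo (2*a) (2*b+1) - μ/2))⁻¹) with hΨ
  have hev : ∀ᶠ μ in 𝓝[≠] μ₀, Phi (2*a) (2*b+1) μ = Ψ μ := by
    have hfin : ∀ᶠ μ in 𝓝[≠] μ₀, ∀ l ∈ Finset.range (s+1), μ + (l:ℂ) ≠ 0 := by
      rw [Filter.eventually_all_finset]
      intro l _
      filter_upwards [ev_ne_pt μ₀ (-(l:ℂ))] with μ h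
      intro h2
      exact h (by linear_combination h2)
    filter_upwards [hfin] with μ hμall
    have hGμ := Gamma_shift μ (s+1) (fun l hl => hμall l (Finset.mem_range.mpr hl))
    have hG1 := GammaInv_shift (qone (2*a) + μ/2) (t+1)
    have hms : μ + (s:ℂ) ≠ 0 := hμall s (Finset.mem_range.mpr (Nat.lt_succ_self s))
    have hcst : qone (2*a) + μ/2 + (t:ℂ) = (μ + (s:ℂ))/2 := by
      rw [hq₁, hs]; push_cast; ring
    have hinv : (μ + (s:ℂ))⁻¹ * (μ + (s:ℂ)) = 1 := inv_mul_cancel₀ hms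
    rw [Phi_eq]
    unfold Afun
    rw [hGμ, hG1, Finset.prod_range_succ, Finset.prod_range_succ, hcst, mul_inv, hΨ]
    simp only []
    linear_combination (Complex.Gamma (μ + ((s+1:ℕ):ℂ)) *
      (∏ l ∈ Finset.range s, (μ + (l:ℂ)))⁻¹ * Complex.Gamma (-μ) *
      (∏ l ∈ Finset.range t, (qone (2*a) + μ/2 + (l:ℂ))) * (2:ℂ)⁻¹ *
      (Complex.Gamma (qone (2*a) + μ/2 + ((t+1:ℕ):ℂ)))⁻¹ *
      (Complex.Gamma (qtwo (2*a) (2*b+1) + μ/2))⁻¹ *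
      (Complex.Gamma (qone (2*a) - μ/2))⁻¹ *
      (Complex.Gamma (qtwo (2*a) (2*b+1) - μ/2))⁻¹) * hinv
  have hμs1 : μ₀ + ((s+1:ℕ):ℂ) = 1 := by rw [hμ₀]; push_cast; ring
  have hprod : (∏ l ∈ Finset.range s, (μ₀ + (l:ℂ))) ≠ 0 := by
    apply Finset.prod_ne_zero_iff.mpr
    intro l hl h0
    rw [hμ₀] at h0
    have hls : (l:ℂ) = (s:ℂ) := by linear_combination h0
    have := Nat.cast_inj.mp hls
    have := Finset.mem_range.mp hl
    omega
  have hqt : qone (2*a) + μ₀/2 = -(t:ℂ) := by rw [hq₁, hμ₀, hs]; push_cast; ring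
  have hcontΨ : ContinuousAt Ψ μ₀ := by
    have c1 : ContinuousAt (fun μ : ℂ => Complex.Gamma (μ + ((s+1:ℕ):ℂ))) μ₀ := by
      have harg : ∀ m : ℕ, μ₀ + ((s+1:ℕ):ℂ) ≠ -(m:ℂ) := by
        intro m; rw [hμs1]; exact one_ne_neg_nat m
      have hd := Complex.differentiableAt_Gamma _ harg
      have hplus : ContinuousAt (fun μ : ℂ => μ + ((s+1:ℕ):ℂ)) μ₀ := by fun_prop
      have := ContinuousAt.comp (g := Complex.Gamma)
        (f := fun μ : ℂ => μ + ((s+1:ℕ):ℂ)) (x := μ₀) hd.continuousAt hplus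
      simpa [Function.comp_def] using this
    have c2 : ContinuousAt (fun μ : ℂ => (∏ l ∈ Finset.range s, (μ + (l:ℂ)))⁻¹) μ₀ :=
      ContinuousAt.inv₀ (Continuous.continuousAt
        (continuous_finset_prod _ fun l _ => by fun_prop)) hprod
    have c3 : ContinuousAt (fun μ : ℂ => ∏ l ∈ Finset.range t, (qone (2*a) + μ/2 + (l:ℂ))) μ₀ :=
      Continuous.continuousAt (continuous_finset_prod _ fun l _ => by fun_prop)
    have c5 : Continuous (fun μ : ℂ => (Complex.Gamma (qone (2*a) + μ/2 + ((t+1:ℕ):ℂ)))⁻¹) :=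
      contInvGamma _ (by fun_prop)
    have c6 : Continuous (fun μ : ℂ => (Complex.Gamma (qtwo (2*a) (2*b+1) + μ/2))⁻¹) :=
      contInvGamma _ (by fun_prop)
    have c7 : ContinuousAt (fun μ : ℂ => Complex.Gamma (-μ)) μ₀ := by
      have hsne : ∀ m : ℕ, -μ₀ ≠ -(m:ℂ) := by
        intro m; rw [hμ₀, neg_neg]; exact pos_nat_ne_neg_nat s (by omega) m
      have hd := Complex.differentiableAt_Gamma _ hsne
      have hneg : ContinuousAt (fun μ : ℂ => -μ) μ₀ := by fun_prop
      have := ContinuousAt.comp (g := Complex.Gamma)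
        (f := fun μ : ℂ => -μ) (x := μ₀) hd.continuousAt hneg
      simpa [Function.comp_def] using this
    have c8 : Continuous (fun μ : ℂ => (Complex.Gamma (qone (2*a) - μ/2))⁻¹) :=
      contInvGamma _ (by fun_prop)
    have c9 : Continuous (fun μ : ℂ => (Complex.Gamma (qtwo (2*a) (2*b+1) - μ/2))⁻¹) :=
      contInvGamma _ (by fun_prop)
    exact ((((((c1.mul c2).mul c3).mul continuousAt_const).mul c5.continuousAt).mul
      c6.continuousAt).mul ((c7.mul c8.continuousAt).mul c9.continuousAt))
  have hlim : Tendsto (Phi (2*a) (2*b+1)) (𝓝[≠] μ₀) (𝓝 (Ψ μ₀)) :=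
    Filter.Tendsto.congr' (hev.mono fun μ h => h.symm)
      (hcontΨ.tendsto.mono_left nhdsWithin_le_nhds)
  have hargq2 : qtwo (2*a) (2*b+1) + μ₀/2 = (b:ℂ) - (t:ℂ) := by
    rw [hq₂, hμ₀, hs]; push_cast; ring
  constructor
  · intro h
    have huniq := tendsto_nhds_unique h hlim
    by_contra hbt
    push_neg at hbt
    have f1 : Complex.Gamma (μ₀ + ((s+1:ℕ):ℂ)) ≠ 0 := by
      rw [hμs1, Complex.Gamma_one]; exact one_ne_zero
    have f2 : (∏ l ∈ Finset.range s, (μ₀ + (l:ℂ)))⁻¹ ≠ 0 := inv_ne_zero hprod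
    have f3 : (∏ l ∈ Finset.range t, (qone (2*a) + μ₀/2 + (l:ℂ))) ≠ 0 := by
      apply Finset.prod_ne_zero_iff.mpr
      intro l hl h0
      rw [hqt] at h0
      have hlt : (l:ℂ) = (t:ℂ) := by linear_combination h0
      have := Nat.cast_inj.mp hlt
      have := Finset.mem_range.mp hl
      omega
    have f5 : (Complex.Gamma (qone (2*a) + μ₀/2 + ((t+1:ℕ):ℂ)))⁻¹ ≠ 0 := by
      have harg : qone (2*a) + μ₀/2 + ((t+1:ℕ):ℂ) = 1 := by rw [hqt]; push_cast; ring
      rw [harg, Complex.Gamma_one]; norm_num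
    have f6 : (Complex.Gamma (qtwo (2*a) (2*b+1) + μ₀/2))⁻¹ ≠ 0 := by
      have he : (b:ℂ) - (t:ℂ) = ((b - t : ℕ):ℂ) := by push_cast [Nat.cast_sub hbt.le]; ring
      rw [hargq2, he]
      exact inv_ne_zero (Gamma_nat_ne _ (by omega))
    have f7 : Complex.Gamma (-μ₀) ≠ 0 := by
      rw [hμ₀, neg_neg]; exact Gamma_nat_ne s (by omega)
    have f8 : (Complex.Gamma (qone (2*a) - μ₀/2))⁻¹ ≠ 0 := by
      have harg : qone (2*a) - μ₀/2 = ((a+1+t : ℕ):ℂ) := by rw [hq₁, hμ₀, hs]; push_cast; ring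
      rw [harg]; exact inv_ne_zero (Gamma_nat_ne _ (by omega))
    have f9 : (Complex.Gamma (qtwo (2*a) (2*b+1) - μ₀/2))⁻¹ ≠ 0 := by
      have harg : qtwo (2*a) (2*b+1) - μ₀/2 = ((a+b+t+1 : ℕ):ℂ) := by
        rw [hq₂, hμ₀, hs]; push_cast; ring
      rw [harg]; exact inv_ne_zero (Gamma_nat_ne _ (by omega))
    have hne : Ψ μ₀ ≠ 0 := by
      rw [hΨ]
      simp only []
      exact mul_ne_zero (mul_ne_zero (mul_ne_zero (mul_ne_zero (mul_ne_zero
        (mul_ne_zero f1 f2) f3) (by norm_num)) f5) f6)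
        (mul_ne_zero (mul_ne_zero f7 f8) f9)
    exact hne huniq.symm
  · intro hbt
    have hz : Ψ μ₀ = 0 := by
      have harg : qtwo (2*a) (2*b+1) + μ₀/2 = -((t - b : ℕ):ℂ) := by
        rw [hargq2]; push_cast [Nat.cast_sub hbt]; ring
      rw [hΨ]
      simp only []
      rw [harg, Complex.Gamma_neg_nat_eq_zero, inv_zero]
      ring
    exact hz ▸ hlim


/-! ### The key pointwise classification -/

lemma sin_pi_int (z : ℂ) (n : ℤ) (h : z = (n:ℂ)) : Complex.sin ((Real.pi:ℂ) * z) = 0 := by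
  apply Complex.sin_eq_zero_iff.mpr
  exact ⟨n, by rw [h]; ring⟩

lemma key (m₁ m₂ : ℕ) (hm₁ : 1 ≤ m₁) (j : ℕ)
    (hcase : (m₂ = 0 ∧ Odd m₁ ∧ j = 1) ∨ (Even m₁ ∧ Odd m₂ ∧ j = 2)) (μ₀ : ℂ) :
    Tendsto (Phi m₁ m₂) (𝓝[≠] μ₀) (𝓝 0) ↔
      ∃ k : ℕ, μ₀ = ((m₁:ℂ)/2 + (m₂:ℂ) + (j:ℂ)*(k:ℂ))
        ∨ μ₀ = -((m₁:ℂ)/2 + (m₂:ℂ) + (j:ℂ)*(k:ℂ)) := by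
  rcases hcase with ⟨hm2, ⟨p, hp⟩, hj⟩ | ⟨⟨a, hA2⟩, ⟨b, hb⟩, hj⟩
  · -- Case 1 : m₂ = 0, m₁ = 2p+1, j = 1
    subst hm2 hj hp
    by_cases hB : μ₀ * Complex.sin ((Real.pi:ℂ) * μ₀) = 0
    · -- μ₀ is an integer point : both sides fail
      have hint : ∃ n : ℤ, μ₀ = (n:ℂ) := by
        rcases mul_eq_zero.mp hB with h | h
        · exact ⟨0, by simpa using h⟩
        · rcases Complex.sin_eq_zero_iff.mp h with ⟨n, hn⟩
          exact ⟨n, mul_left_cancel₀ piC_ne (hn.trans (mul_comm _ _))⟩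
      obtain ⟨n, hn⟩ := hint
      have hA : Afun (qone (2*p+1)) (qtwo (2*p+1) 0) μ₀ ≠ 0 := by
        unfold Afun qone qtwo
        refine mul_ne_zero (mul_ne_zero (mul_ne_zero ?_ ?_) ?_) ?_ <;>
          refine inv_ne_zero (Complex.Gamma_ne_zero fun m h => ?_)
        · have h2 : ((2*(p:ℤ) + 3 + 2*n + 4*m : ℤ) : ℂ) = 0 := by
            rw [hn] at h; push_cast at h ⊢; linear_combination 4*h
          have := (Int.cast_eq_zero (α := ℂ)).mp h2; omega
        · have h2 : ((2*(p:ℤ) + 1 + 2*n + 4*m : ℤ) : ℂ) = 0 := by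
            rw [hn] at h; push_cast at h ⊢; linear_combination 4*h
          have := (Int.cast_eq_zero (α := ℂ)).mp h2; omega
        · have h2 : ((2*(p:ℤ) + 3 - 2*n + 4*m : ℤ) : ℂ) = 0 := by
            rw [hn] at h; push_cast at h ⊢; linear_combination 4*h
          have := (Int.cast_eq_zero (α := ℂ)).mp h2; omega
        · have h2 : ((2*(p:ℤ) + 1 - 2*n + 4*m : ℤ) : ℂ) = 0 := by
            rw [hn] at h; push_cast at h ⊢; linear_combination 4*h
          have := (Int.cast_eq_zero (α := ℂ)).mp h2; omega
      constructor
      · intro h; exact absurd h (caseII _ _ hA)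
      · rintro ⟨k, hk | hk⟩ <;> exfalso <;> rw [hn] at hk
        · have h2 : ((2*n - 2*(p:ℤ) - 1 - 2*k : ℤ) : ℂ) = 0 := by
            push_cast at hk ⊢; linear_combination 2*hk
          have := (Int.cast_eq_zero (α := ℂ)).mp h2; omega
        · have h2 : ((2*n + 2*(p:ℤ) + 1 + 2*k : ℤ) : ℂ) = 0 := by
            push_cast at hk ⊢; linear_combination 2*hk
          have := (Int.cast_eq_zero (α := ℂ)).mp h2; omega
    · rw [caseI _ _ hB]
      constructor
      · intro hA0
        simp only [Afun, mul_eq_zero, inv_eq_zero, Complex.Gamma_eq_zero_iff] at hA0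
        rcases hA0 with ((⟨m, hm⟩ | ⟨m, hm⟩) | ⟨m, hm⟩) | ⟨m, hm⟩
        · exact ⟨2*m+1, Or.inr (by unfold qone at hm; push_cast at hm ⊢; linear_combination 2*hm)⟩
        · exact ⟨2*m, Or.inr (by unfold qtwo at hm; push_cast at hm ⊢; linear_combination 2*hm)⟩
        · exact ⟨2*m+1, Or.inl (by unfold qone at hm; push_cast at hm ⊢; linear_combination -2*hm)⟩
        · exact ⟨2*m, Or.inl (by unfold qtwo at hm; push_cast at hm ⊢; linear_combination -2*hm)⟩
      · rintro ⟨k, hk | hk⟩ <;> rcases Nat.even_or_odd k with ⟨m, hm⟩ | ⟨m, hm⟩ <;>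
          simp only [Afun, mul_eq_zero, inv_eq_zero, Complex.Gamma_eq_zero_iff]
        · exact Or.inr ⟨m, by unfold qtwo; rw [hk, hm]; push_cast; ring⟩
        · exact Or.inl (Or.inr ⟨m, by unfold qone; rw [hk, hm]; push_cast; ring⟩)
        · exact Or.inl (Or.inl (Or.inr ⟨m, by unfold qtwo; rw [hk, hm]; push_cast; ring⟩))
        · exact Or.inl (Or.inl (Or.inl ⟨m, by unfold qone; rw [hk, hm]; push_cast; ring⟩))
  · -- Case 2 : m₁ = 2a, m₂ = 2b+1, j = 2
    subst hj hb hA2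
    rw [show a + a = 2*a from by ring] at hm₁ ⊢
    have ha : 1 ≤ a := by omega
    have hq₁ : qone (2*a) = ((a:ℂ)+1)/2 := by unfold qone; push_cast; ring
    have hq₂ : qtwo (2*a) (2*b+1) = ((a:ℂ)+2*b+1)/2 := by unfold qtwo; push_cast; ring
    by_cases hB : μ₀ * Complex.sin ((Real.pi:ℂ) * μ₀) = 0
    · have hint : ∃ n : ℤ, μ₀ = (n:ℂ) := by
        rcases mul_eq_zero.mp hB with h | h
        · exact ⟨0, by simpa using h⟩
        · rcases Complex.sin_eq_zero_iff.mp h with ⟨n, hn⟩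
          exact ⟨n, mul_left_cancel₀ piC_ne (hn.trans (mul_comm _ _))⟩
      obtain ⟨n, hn⟩ := hint
      have neg_case : ∀ s : ℕ,
          (Tendsto (Phi (2*a) (2*b+1)) (𝓝[≠] (-(s:ℂ))) (𝓝 0) ↔
            ∃ k : ℕ, -(s:ℂ) = (((2*a:ℕ):ℂ)/2 + ((2*b+1:ℕ):ℂ) + ((2:ℕ):ℂ)*(k:ℂ))
              ∨ -(s:ℂ) = -(((2*a:ℕ):ℂ)/2 + ((2*b+1:ℕ):ℂ) + ((2:ℕ):ℂ)*(k:ℂ))) := by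
        intro s
        by_cases hst : ∃ t : ℕ, s = a + 1 + 2*t
        · obtain ⟨t, ht⟩ := hst
          subst ht
          rw [caseIII a b t ha]
          constructor
          · intro hbt
            refine ⟨t - b, Or.inr ?_⟩
            push_cast [Nat.cast_sub hbt]
            ring
          · rintro ⟨k, hk | hk⟩
            · exfalso
              have h2 : ((2*(a+1+2*t) + 2*a + 2*(2*b+1) + 4*k : ℕ):ℂ) = 0 := by
                push_cast at hk ⊢; linear_combination -2*hk
              have := Nat.cast_eq_zero.mp h2; omega
            · have h2 : ((2*(a+1+2*t) : ℕ):ℂ) = ((2*a + 2*(2*b+1) + 4*k : ℕ):ℂ) := by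
                push_cast at hk ⊢; linear_combination -2*hk
              have := Nat.cast_inj.mp h2; omega
        · have hA : Afun (qone (2*a)) (qtwo (2*a) (2*b+1)) (-(s:ℂ)) ≠ 0 := by
            unfold Afun
            refine mul_ne_zero (mul_ne_zero (mul_ne_zero ?_ ?_) ?_) ?_ <;>
              refine inv_ne_zero (Complex.Gamma_ne_zero fun m h => ?_)
            · rw [hq₁] at h
              have h2 : ((a+1+2*m : ℕ):ℂ) = (s:ℂ) := by push_cast at h ⊢; linear_combination 2*h
              exact hst ⟨m, (Nat.cast_inj.mp h2).symm⟩
            · rw [hq₂] at h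
              have h2 : ((a+2*b+1+2*m : ℕ):ℂ) = (s:ℂ) := by push_cast at h ⊢; linear_combination 2*h
              have := Nat.cast_inj.mp h2
              exact hst ⟨b+m, by omega⟩
            · rw [hq₁] at h
              have h2 : ((a+1+s+2*m : ℕ):ℂ) = 0 := by push_cast at h ⊢; linear_combination 2*h
              have := Nat.cast_eq_zero.mp h2; omega
            · rw [hq₂] at h
              have h2 : ((a+2*b+1+s+2*m : ℕ):ℂ) = 0 := by push_cast at h ⊢; linear_combination 2*h
              have := Nat.cast_eq_zero.mp h2; omega
          constructor
          · intro h; exact absurd h (caseII _ _ hA)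
          · rintro ⟨k, hk | hk⟩ <;> exfalso
            · have h2 : ((2*s + 2*a + 2*(2*b+1) + 4*k : ℕ):ℂ) = 0 := by
                push_cast at hk ⊢; linear_combination -2*hk
              have := Nat.cast_eq_zero.mp h2; omega
            · have h2 : ((2*s : ℕ):ℂ) = ((2*a + 2*(2*b+1) + 4*k : ℕ):ℂ) := by
                push_cast at hk ⊢; linear_combination -2*hk
              have := Nat.cast_inj.mp h2
              exact hst ⟨b+k, by omega⟩
      rcases le_or_gt n 0 with hn0 | hn0
      · have h1 : ((n.natAbs : ℕ):ℂ) = -(n:ℂ) := by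
          have h4 := congrArg (fun z : ℤ => (z : ℂ)) (show (n.natAbs : ℤ) = -n by omega)
          simp only [Int.cast_natCast, Int.cast_neg] at h4
          exact h4
        have hs : μ₀ = -((n.natAbs : ℕ):ℂ) := by rw [hn, h1]; ring
        rw [hs]
        exact neg_case n.natAbs
      · have h1 : ((n.natAbs : ℕ):ℂ) = (n:ℂ) := by
          have h4 := congrArg (fun z : ℤ => (z : ℂ)) (show (n.natAbs : ℤ) = n by omega)
          simp only [Int.cast_natCast] at h4
          exact h4
        have hs : μ₀ = ((n.natAbs : ℕ):ℂ) := by rw [hn, h1]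
        rw [hs, ← tendsto_Phi_neg_iff, neg_case n.natAbs]
        constructor <;> rintro ⟨k, hk | hk⟩ <;>
          first
            | exact ⟨k, Or.inr (by linear_combination -hk)⟩
            | exact ⟨k, Or.inl (by linear_combination -hk)⟩
    · rw [caseI _ _ hB]
      have hsin : Complex.sin ((Real.pi:ℂ)*μ₀) ≠ 0 := by
        intro h; exact hB (by rw [h, mul_zero])
      constructor
      · intro hA0
        exfalso
        apply hsin
        simp only [Afun, mul_eq_zero, inv_eq_zero, Complex.Gamma_eq_zero_iff] at hA0
        rcases hA0 with ((⟨m, hm⟩ | ⟨m, hm⟩) | ⟨m, hm⟩) | ⟨m, hm⟩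
        · rw [hq₁] at hm
          exact sin_pi_int μ₀ (-(a:ℤ)-1-2*m) (by push_cast; linear_combination 2*hm)
        · rw [hq₂] at hm
          exact sin_pi_int μ₀ (-(a:ℤ)-2*b-1-2*m) (by push_cast; linear_combination 2*hm)
        · rw [hq₁] at hm
          exact sin_pi_int μ₀ ((a:ℤ)+1+2*m) (by push_cast; linear_combination -2*hm)
        · rw [hq₂] at hm
          exact sin_pi_int μ₀ ((a:ℤ)+2*b+1+2*m) (by push_cast; linear_combination -2*hm)
      · rintro ⟨k, hk | hk⟩ <;> exfalso <;> apply hsin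
        · exact sin_pi_int μ₀ ((a:ℤ)+2*b+1+2*k) (by rw [hk]; push_cast; ring)
        · exact sin_pi_int μ₀ (-(a:ℤ)-2*b-1-2*k) (by rw [hk]; push_cast; ring)


lemma gr_ne (m₁ m₂ : ℕ) (hm₁ : 1 ≤ m₁) : gfun m₁ m₂ ((rho m₁ m₂ : ℂ)) ≠ 0 := by
  have hm₁R : (1:ℝ) ≤ (m₁:ℝ) := by exact_mod_cast hm₁
  have hm₂R : (0:ℝ) ≤ (m₂:ℝ) := Nat.cast_nonneg m₂
  have hrho : ((rho m₁ m₂ : ℝ):ℂ) = (((m₁:ℝ)/2 + (m₂:ℝ) : ℝ):ℂ) := by unfold rho; norm_num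
  unfold gfun
  apply div_ne_zero
  · apply mul_ne_zero
    · apply Complex.Gamma_ne_zero
      intro m h
      rw [hrho] at h
      have h2 : ((m₁ + 2*m₂ + 2*m : ℕ):ℂ) = 0 := by push_cast at h ⊢; linear_combination 2*h
      exact absurd (Nat.cast_eq_zero.mp h2) (by omega)
    · intro h
      have h1 : (2:ℂ)^(-((rho m₁ m₂ : ℝ):ℂ)) * (2:ℂ)^(((rho m₁ m₂ : ℝ):ℂ)) = 1 := by
        rw [← Complex.cpow_add _ _ (by norm_num : (2:ℂ) ≠ 0)]
        simp
      rw [h, zero_mul] at h1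
      exact zero_ne_one h1
  · apply mul_ne_zero <;> apply Complex.Gamma_ne_zero <;> intro m h <;> rw [hrho] at h
    · have h2 : ((m₁ + 1 + m₂ + 2*m : ℕ):ℂ) = 0 := by push_cast at h ⊢; linear_combination 2*h
      exact absurd (Nat.cast_eq_zero.mp h2) (by omega)
    · have h2 : ((m₁ + 2*m₂ + 2*m : ℕ):ℂ) = 0 := by push_cast at h ⊢; linear_combination 2*h
      exact absurd (Nat.cast_eq_zero.mp h2) (by omega)


end CZL

theorem cProduct_zero_location (m₁ m₂ : ℕ) (hm₁ : 1 ≤ m₁) (j : ℕ)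
    (hcase : (m₂ = 0 ∧ Odd m₁ ∧ j = 1) ∨ (Even m₁ ∧ Odd m₂ ∧ j = 2)) (ζ₀ : ℂ) :
    Filter.Tendsto
        (fun ζ : ℂ => cfun m₁ m₂ (Complex.I * ζ) * cfun m₁ m₂ (-(Complex.I * ζ)))
        (nhdsWithin ζ₀ {ζ₀}ᶜ) (nhds 0)
      ↔ ∃ k : ℕ, ζ₀ = Complex.I * ((rho m₁ m₂ : ℂ) + (j : ℂ) * (k : ℂ))
          ∨ ζ₀ = -(Complex.I * ((rho m₁ m₂ : ℂ) + (j : ℂ) * (k : ℂ))) := by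
  have hgr := CZL.gr_ne m₁ m₂ hm₁
  have hrho : ((rho m₁ m₂ : ℝ):ℂ) = (m₁:ℂ)/2 + (m₂:ℂ) := by unfold rho; push_cast; ring
  have hfe : (fun ζ : ℂ => cfun m₁ m₂ (Complex.I * ζ) * cfun m₁ m₂ (-(Complex.I * ζ)))
      = fun ζ : ℂ => CZL.Phi m₁ m₂ (Complex.I * ζ) *
          ((gfun m₁ m₂ ((rho m₁ m₂ : ℂ)))⁻¹ * (gfun m₁ m₂ ((rho m₁ m₂ : ℂ)))⁻¹) := by
    funext ζ
    unfold cfun CZL.Phi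
    rw [div_eq_mul_inv, div_eq_mul_inv]
    ring
  rw [hfe,
    CZL.tendsto_mul_const_zero_iff _ (mul_ne_zero (inv_ne_zero hgr) (inv_ne_zero hgr)),
    CZL.tendsto_comp_mul_iff Complex.I Complex.I_ne_zero (CZL.Phi m₁ m₂) ζ₀,
    CZL.key m₁ m₂ hm₁ j hcase (Complex.I * ζ₀)]
  constructor
  · rintro ⟨k, hk | hk⟩
    · refine ⟨k, Or.inr ?_⟩
      rw [hrho]
      linear_combination (-Complex.I)*hk + ζ₀*Complex.I_sq
    · refine ⟨k, Or.inl ?_⟩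
      rw [hrho]
      linear_combination (-Complex.I)*hk + ζ₀*Complex.I_sq
  · rintro ⟨k, hk | hk⟩
    · refine ⟨k, Or.inr ?_⟩
      rw [hrho] at hk
      linear_combination Complex.I*hk + ((m₁:ℂ)/2 + (m₂:ℂ) + (j:ℂ)*(k:ℂ))*Complex.I_sq
    · refine ⟨k, Or.inl ?_⟩
      rw [hrho] at hk
      linear_combination Complex.I*hk - ((m₁:ℂ)/2 + (m₂:ℂ) + (j:ℂ)*(k:ℂ))*Complex.I_sq

end
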